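/- Let A and B be C*-algebras and let f : A → B be an odd mapping (f(−a) = −f(a) for all a ∈ A) for which there exists a function φ : A × A × A → [0,∞) such that (i) Σ_{i=0}^{∞} 3^i φ(a/3^i, b/3^i, c/3^i) < ∞ for all a, b, c ∈ A, (ii) lim_{n→∞} 3^{2n} φ(a/3^n, b/3^n, c/3^n) = 0 for all a, b, c ∈ A, (iii) ‖f(a*) − f(a)*‖ ≤ φ(a, a, a) for all a ∈ A, and (iv) ‖f((μb−a)/3) + f((a−3c)/3) + μ·f((3a−b)/3 + c) − f(a) + f(c²) − f(c)²‖ ≤ φ(a, b, c) for all a, b, c ∈ A and all μ ∈ 𝕋¹. Then there exists a unique Jordan *-homomorphism h : A → B such that ‖h(a) − f(a)‖ ≤ Σ_{i=0}^{∞} 3^i φ(a/3^i, 2a/3^i, 0) for all a ∈ A. -/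

import Mathlib

open Filter
open Topology

/-- Generalized Hyers–Ulam stability of Jordan *-homomorphisms (contraction direction). -/
theorem stmt_4
    {A B : Type*}
    [NormedRing A] [StarRing A] [CStarRing A] [NormedAlgebra ℂ A] [StarModule ℂ A]
    [CompleteSpace A]
    [NormedRing B] [StarRing B] [CStarRing B] [NormedAlgebra ℂ B] [StarModule ℂ B]
    [CompleteSpace B]
    (f : A → B) (hodd : ∀ a : A, f (-a) = -f a)
    (φ : A → A → A → ℝ) (hφ : ∀ a b c : A, 0 ≤ φ a b c)
    (hsum : ∀ a b c : A, Summable (fun i : ℕ =>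
      (3:ℝ)^i * φ (((3:ℂ)^i)⁻¹ • a) (((3:ℂ)^i)⁻¹ • b) (((3:ℂ)^i)⁻¹ • c)))
    (hlim : ∀ a b c : A, Tendsto (fun n : ℕ =>
      (3:ℝ)^(2*n) * φ (((3:ℂ)^n)⁻¹ • a) (((3:ℂ)^n)⁻¹ • b) (((3:ℂ)^n)⁻¹ • c))
      atTop (nhds 0))
    (hstar : ∀ a : A, ‖f (star a) - star (f a)‖ ≤ φ a a a)
    (hineq : ∀ μ : ℂ, ‖μ‖ = 1 → ∀ a b c : A,
      ‖f ((3:ℂ)⁻¹ • (μ • b - a)) + f ((3:ℂ)⁻¹ • (a - (3:ℂ) • c)) +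
        μ • f ((3:ℂ)⁻¹ • ((3:ℂ) • a - b) + c) - f a + f (c ^ 2) - (f c) ^ 2‖
        ≤ φ a b c) :
    ∃! h : A → B,
      (IsLinearMap ℂ h ∧ (∀ a : A, h (a ^ 2) = (h a) ^ 2) ∧
        (∀ a : A, h (star a) = star (h a))) ∧
      ∀ a : A, ‖h a - f a‖ ≤
        ∑' i : ℕ, (3:ℝ)^i * φ (((3:ℂ)^i)⁻¹ • a) (((3:ℂ)^i)⁻¹ • ((2:ℂ) • a)) 0 := by
  have h3 : (3:ℂ) ≠ 0 := by norm_num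
  have h3n : ∀ n : ℕ, ((3:ℂ)^n) ≠ 0 := fun n => pow_ne_zero n h3
  have hn3 : ∀ n : ℕ, ‖(3:ℂ)^n‖ = (3:ℝ)^n := fun n => by norm_num
  -- f 0 = 0
  have hf0 : f 0 = 0 := by
    have h1 : f 0 = - f 0 := by simpa using hodd 0
    have h2 : (2:ℂ) • f 0 = 0 := by
      rw [two_smul]; nth_rewrite 2 [h1]; exact add_neg_cancel _
    exact (smul_eq_zero.mp h2).resolve_left (by norm_num)
  -- base inequality
  have hbase : ∀ a : A, ‖(3:ℂ) • f ((3:ℂ)⁻¹ • a) - f a‖ ≤ φ a ((2:ℂ) • a) 0 := by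
    intro a
    have hq := hineq 1 (by norm_num) a ((2:ℂ) • a) 0
    rw [show (1:ℂ) • ((2:ℂ) • a) - a = a by module,
        show a - (3:ℂ) • (0:A) = a by module,
        show (3:ℂ)⁻¹ • ((3:ℂ) • a - (2:ℂ) • a) + (0:A) = (3:ℂ)⁻¹ • a by module,
        show ((0:A)^2) = 0 by norm_num, hf0, one_smul,
        show (0:B)^2 = 0 by norm_num] at hq
    calc ‖(3:ℂ) • f ((3:ℂ)⁻¹ • a) - f a‖
        = ‖f ((3:ℂ)⁻¹ • a) + f ((3:ℂ)⁻¹ • a) + f ((3:ℂ)⁻¹ • a) - f a + 0 - 0‖ := by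
          rw [show f ((3:ℂ)⁻¹ • a) + f ((3:ℂ)⁻¹ • a) + f ((3:ℂ)⁻¹ • a) - f a + 0 - 0
              = (3:ℂ) • f ((3:ℂ)⁻¹ • a) - f a by module]
      _ ≤ φ a ((2:ℂ) • a) 0 := hq
  set F : ℕ → A → B := fun n a => (3:ℂ)^n • f (((3:ℂ)^n)⁻¹ • a) with hF
  have hFsucc : ∀ (a : A) (n : ℕ), F (n+1) a
      = (3:ℂ)^n • ((3:ℂ) • f ((3:ℂ)⁻¹ • (((3:ℂ)^n)⁻¹ • a))) := by
    intro a n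
    simp only [hF]
    rw [show ((3:ℂ)^(n+1))⁻¹ • a = (3:ℂ)⁻¹ • (((3:ℂ)^n)⁻¹ • a) by
        rw [pow_succ, mul_inv]; module, pow_succ]
    module
  have hdist : ∀ (a : A) (n : ℕ), dist (F n a) (F (n+1) a)
      ≤ (3:ℝ)^n * φ (((3:ℂ)^n)⁻¹ • a) (((3:ℂ)^n)⁻¹ • ((2:ℂ) • a)) 0 := by
    intro a n
    have e : F (n+1) a - F n a
        = (3:ℂ)^n • ((3:ℂ) • f ((3:ℂ)⁻¹ • (((3:ℂ)^n)⁻¹ • a)) - f (((3:ℂ)^n)⁻¹ • a)) := by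
      rw [hFsucc]; simp only [hF]; module
    rw [dist_comm, dist_eq_norm, e, norm_smul, hn3 n]
    have hb := hbase (((3:ℂ)^n)⁻¹ • a)
    rw [show (2:ℂ) • (((3:ℂ)^n)⁻¹ • a) = ((3:ℂ)^n)⁻¹ • ((2:ℂ) • a) by module] at hb
    exact mul_le_mul_of_nonneg_left hb (by positivity)
  have hex : ∀ a : A, ∃ L, Tendsto (fun n => F n a) atTop (𝓝 L) := by
    intro a
    exact cauchySeq_tendsto_of_complete
      (cauchySeq_of_dist_le_of_summable _ (fun n => hdist a n) (by simpa [smul_zero] using hsum a ((2:ℂ) • a) 0))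
  choose h hh using hex
  have hF0 : ∀ a : A, F 0 a = f a := by intro a; simp [hF]
  have hbnd : ∀ a : A, ‖h a - f a‖ ≤
      ∑' i : ℕ, (3:ℝ)^i * φ (((3:ℂ)^i)⁻¹ • a) (((3:ℂ)^i)⁻¹ • ((2:ℂ) • a)) 0 := by
    intro a
    have := dist_le_tsum_of_dist_le_of_tendsto₀ _ (fun n => hdist a n)
      (by simpa [smul_zero] using hsum a ((2:ℂ) • a) 0) (hh a)
    rw [hF0, dist_eq_norm, norm_sub_rev] at this
    exact this
  have hscale : ∀ a : A, h ((3:ℂ)⁻¹ • a) = (3:ℂ)⁻¹ • h a := by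
    intro a
    have e : ∀ n, F n ((3:ℂ)⁻¹ • a) = (3:ℂ)⁻¹ • F (n+1) a := by
      intro n
      rw [hFsucc]; simp only [hF]
      rw [show ((3:ℂ)^n)⁻¹ • ((3:ℂ)⁻¹ • a) = (3:ℂ)⁻¹ • (((3:ℂ)^n)⁻¹ • a) by module]
      module
    have t1 : Tendsto (fun n => F n ((3:ℂ)⁻¹ • a)) atTop (𝓝 ((3:ℂ)⁻¹ • h a)) := by
      simp only [e]
      exact ((hh a).comp (tendsto_add_atTop_nat 1)).const_smul _
    exact tendsto_nhds_unique (hh _) t1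
  have hneg : ∀ a : A, h (-a) = - h a := by
    intro a
    have e : ∀ n, F n (-a) = - F n a := by
      intro n; simp only [hF, smul_neg, hodd]
    have t1 : Tendsto (fun n => F n (-a)) atTop (𝓝 (- h a)) := by
      simp only [e]; exact (hh a).neg
    exact tendsto_nhds_unique (hh _) t1
  have h0 : h 0 = 0 := by
    have e : ∀ n, F n (0:A) = 0 := by intro n; simp [hF, hf0]
    have t1 : Tendsto (fun n => F n (0:A)) atTop (𝓝 0) := by
      simp only [e]; exact tendsto_const_nhds
    exact tendsto_nhds_unique (hh 0) t1
  -- the key limiting identity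
  have L : ∀ μ : ℂ, ‖μ‖ = 1 → ∀ a b : A,
      h ((3:ℂ)⁻¹ • (μ • b - a)) + h ((3:ℂ)⁻¹ • a) + μ • h ((3:ℂ)⁻¹ • ((3:ℂ) • a - b)) = h a := by
    intro μ hμ a b
    set G : ℕ → B := fun n => F n ((3:ℂ)⁻¹ • (μ • b - a)) + F n ((3:ℂ)⁻¹ • a)
      + μ • F n ((3:ℂ)⁻¹ • ((3:ℂ) • a - b)) - F n a with hG
    have hGlim : Tendsto G atTop (𝓝 (h ((3:ℂ)⁻¹ • (μ • b - a)) + h ((3:ℂ)⁻¹ • a)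
        + μ • h ((3:ℂ)⁻¹ • ((3:ℂ) • a - b)) - h a)) :=
      (((hh _).add (hh _)).add ((hh _).const_smul μ)).sub (hh a)
    have hGn : ∀ n, ‖G n‖ ≤ (3:ℝ)^n * φ (((3:ℂ)^n)⁻¹ • a) (((3:ℂ)^n)⁻¹ • b) 0 := by
      intro n
      have hq := hineq μ hμ (((3:ℂ)^n)⁻¹ • a) (((3:ℂ)^n)⁻¹ • b) 0
      rw [show (3:ℂ)⁻¹ • (μ • (((3:ℂ)^n)⁻¹ • b) - ((3:ℂ)^n)⁻¹ • a)
            = ((3:ℂ)^n)⁻¹ • ((3:ℂ)⁻¹ • (μ • b - a)) by module,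
          show (3:ℂ)⁻¹ • (((3:ℂ)^n)⁻¹ • a - (3:ℂ) • (0:A))
            = ((3:ℂ)^n)⁻¹ • ((3:ℂ)⁻¹ • a) by module,
          show (3:ℂ)⁻¹ • ((3:ℂ) • (((3:ℂ)^n)⁻¹ • a) - ((3:ℂ)^n)⁻¹ • b) + (0:A)
            = ((3:ℂ)^n)⁻¹ • ((3:ℂ)⁻¹ • ((3:ℂ) • a - b)) by module,
          show ((0:A)^2) = 0 by norm_num, hf0,
          show (0:B)^2 = 0 by norm_num] at hq
      have e : G n = (3:ℂ)^n • (f (((3:ℂ)^n)⁻¹ • ((3:ℂ)⁻¹ • (μ • b - a)))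
          + f (((3:ℂ)^n)⁻¹ • ((3:ℂ)⁻¹ • a))
          + μ • f (((3:ℂ)^n)⁻¹ • ((3:ℂ)⁻¹ • ((3:ℂ) • a - b)))
          - f (((3:ℂ)^n)⁻¹ • a) + 0 - 0) := by
        simp only [hG, hF]; module
      rw [e, norm_smul, hn3 n]
      exact mul_le_mul_of_nonneg_left hq (by positivity)
    have hzero : Tendsto (fun n => (3:ℝ)^n * φ (((3:ℂ)^n)⁻¹ • a) (((3:ℂ)^n)⁻¹ • b) 0)
        atTop (𝓝 0) := by
      have := (hsum a b 0).tendsto_atTop_zero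
      simpa [smul_zero] using this
    have := tendsto_nhds_unique hGlim (squeeze_zero_norm hGn hzero)
    exact sub_eq_zero.mp this
  -- additivity
  have key : ∀ a b : A, h (b - a) + h a + h ((3:ℂ) • a - b) = (3:ℂ) • h a := by
    intro a b
    have hl := L 1 (by norm_num) a b
    simp only [one_smul] at hl
    rw [hscale, hscale, hscale] at hl
    linear_combination (norm := module) (3:ℂ) • hl
  have half : ∀ x : A, (2:ℂ) • h ((2:ℂ)⁻¹ • x) = h x := by
    intro x
    have hk := key ((2:ℂ)⁻¹ • x) ((2:ℂ)⁻¹ • x)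
    rw [sub_self, h0,
        show (3:ℂ) • ((2:ℂ)⁻¹ • x) - (2:ℂ)⁻¹ • x = x by module] at hk
    linear_combination (norm := module) -hk
  have hadd : ∀ x y : A, h (x + y) = h x + h y := by
    intro x y
    have hk := key ((2:ℂ)⁻¹ • (x + y)) ((2:ℂ)⁻¹ • (x + y) + x)
    rw [show ((2:ℂ)⁻¹ • (x + y) + x) - (2:ℂ)⁻¹ • (x + y) = x by module,
        show (3:ℂ) • ((2:ℂ)⁻¹ • (x + y)) - ((2:ℂ)⁻¹ • (x + y) + x) = y by module] at hk
    have hh2 := half (x + y)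
    linear_combination (norm := module) -hk - hh2
  -- unimodular homogeneity
  have hT : ∀ μ : ℂ, ‖μ‖ = 1 → ∀ b : A, h (μ • b) = μ • h b := by
    intro μ hμ b
    have hl := L μ hμ 0 b
    rw [sub_zero, show (3:ℂ) • (0:A) - b = -b by module, smul_zero, h0,
        hscale (μ • b),
        show (3:ℂ)⁻¹ • (-b) = -((3:ℂ)⁻¹ • b) from smul_neg _ _, hneg, hscale b] at hl
    linear_combination (norm := module) (3:ℂ) • hl
  -- ℕ homogeneity
  have hnat : ∀ (n : ℕ) (x : A), h ((n:ℂ) • x) = (n:ℂ) • h x := by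
    intro n
    induction n with
    | zero => intro x; simp [h0]
    | succ k ih =>
        intro x
        have e : ((k+1 : ℕ) : ℂ) • x = (k:ℂ) • x + x := by push_cast; module
        have e' : ((k+1 : ℕ) : ℂ) • h x = (k:ℂ) • h x + h x := by push_cast; module
        rw [e, hadd, ih, e']
  -- small real homogeneity
  have hrsmall : ∀ t : ℝ, |t| ≤ 1 → ∀ x : A, h ((t:ℂ) • x) = (t:ℂ) • h x := by
    intro t ht x
    set s : ℝ := Real.sqrt (1 - t^2) with hs
    have ht2 : t^2 ≤ 1 := by nlinarith [abs_nonneg t, sq_abs t]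
    have hs2 : s^2 = 1 - t^2 := Real.sq_sqrt (by linarith)
    have hμ1 : ‖(t:ℂ) + (s:ℂ) * Complex.I‖ = 1 := by
      rw [Complex.norm_add_mul_I,
        show t^2 + s^2 = 1 by rw [hs2]; ring, Real.sqrt_one]
    have hμ2 : ‖(t:ℂ) - (s:ℂ) * Complex.I‖ = 1 := by
      rw [show (t:ℂ) - (s:ℂ) * Complex.I = (((-1:ℝ)*1 : ℝ) : ℂ) * ((-t:ℝ) + (s:ℝ) * Complex.I) by
        push_cast; ring]
      rw [norm_mul, Complex.norm_add_mul_I,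
        show (-t)^2 + s^2 = 1 by rw [hs2]; ring, Real.sqrt_one]
      norm_num
    have e1 := hT _ hμ1 x
    have e2 := hT _ hμ2 x
    have hsum2 : h (((t:ℂ) + (s:ℂ) * Complex.I) • x + ((t:ℂ) - (s:ℂ) * Complex.I) • x)
        = ((t:ℂ) + (s:ℂ) * Complex.I) • h x + ((t:ℂ) - (s:ℂ) * Complex.I) • h x := by
      rw [hadd, e1, e2]
    rw [show ((t:ℂ) + (s:ℂ) * Complex.I) • x + ((t:ℂ) - (s:ℂ) * Complex.I) • x
        = (t:ℂ) • x + (t:ℂ) • x by module, hadd] at hsum2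
    have h2 : (2:ℂ) • h ((t:ℂ) • x) = (2:ℂ) • ((t:ℂ) • h x) := by
      linear_combination (norm := module) hsum2
    have := congrArg (fun z => (2:ℂ)⁻¹ • z) h2
    simpa [inv_smul_smul₀ (two_ne_zero' ℂ)] using this
  -- real homogeneity
  have hreal : ∀ (t : ℝ) (x : A), h ((t:ℂ) • x) = (t:ℂ) • h x := by
    intro t x
    set n : ℕ := ⌈|t|⌉₊ + 1 with hn
    have hn0 : (0:ℝ) < n := by positivity
    have hn0' : (n:ℝ) ≠ 0 := ne_of_gt hn0
    have habs : |t / n| ≤ 1 := by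
      rw [abs_div, abs_of_pos hn0]
      apply div_le_one_of_le₀ _ (le_of_lt hn0)
      calc |t| ≤ ⌈|t|⌉₊ := Nat.le_ceil _
        _ ≤ n := by exact_mod_cast Nat.le_succ _
    have e : (t:ℂ) • x = (n:ℂ) • (((t/n : ℝ):ℂ) • x) := by
      rw [smul_smul]
      congr 1
      have hcne : ((⌈|t|⌉₊:ℂ) + 1) ≠ 0 := Nat.cast_add_one_ne_zero _
      push_cast
      rw [mul_div_cancel₀ _ (by exact_mod_cast hn0')]
    rw [e, hnat, hrsmall _ habs, smul_smul]
    congr 1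
    have hcne : ((⌈|t|⌉₊:ℂ) + 1) ≠ 0 := Nat.cast_add_one_ne_zero _
    push_cast
    rw [mul_div_cancel₀ _ (by exact_mod_cast hn0')]
  -- ℂ homogeneity
  have hC : ∀ (z : ℂ) (x : A), h (z • x) = z • h x := by
    intro z x
    have hz : z = (z.re:ℂ) + (z.im:ℂ) * Complex.I := (Complex.re_add_im z).symm
    have e : z • x = (z.re:ℂ) • x + (z.im:ℂ) • (Complex.I • x) := by
      nth_rewrite 1 [hz]; module
    rw [e, hadd, hreal, hreal, hT _ (by simp) x]
    nth_rewrite 3 [hz]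
    module
  -- Jordan property
  have hbase2 : ∀ c : A, ‖f (c^2) - (f c)^2‖ ≤ φ 0 0 c := by
    intro c
    have hq := hineq 1 (by norm_num) 0 0 c
    rw [show (1:ℂ) • (0:A) - (0:A) = (0:A) by module, smul_zero,
        show (3:ℂ)⁻¹ • ((0:A) - (3:ℂ) • c) = -c by module,
        show (3:ℂ)⁻¹ • ((3:ℂ) • (0:A) - (0:A)) + c = c by module,
        hf0, hodd, one_smul] at hq
    calc ‖f (c^2) - (f c)^2‖ = ‖(0:B) + -f c + f c - 0 + f (c^2) - (f c)^2‖ := by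
          rw [show (0:B) + -f c + f c - 0 + f (c^2) - (f c)^2 = f (c^2) - (f c)^2 by module]
      _ ≤ φ 0 0 c := hq
  have hsq : ∀ c : A, h (c^2) = (h c)^2 := by
    intro c
    set G : ℕ → B := fun n => F (2*n) (c^2) - (F n c)^2 with hG
    have hGn : ∀ n, ‖G n‖ ≤ (3:ℝ)^(2*n) * φ 0 0 (((3:ℂ)^n)⁻¹ • c) := by
      intro n
      have e : G n = ((3:ℂ)^n)^2 • (f ((((3:ℂ)^n)⁻¹ • c)^2) - (f (((3:ℂ)^n)⁻¹ • c))^2) := by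
        simp only [hG, hF]
        rw [smul_sub]
        congr 1
        · rw [show (((3:ℂ)^n)⁻¹ • c)^2 = ((3:ℂ)^(2*n))⁻¹ • c^2 by
            rw [smul_pow, inv_pow, ← pow_mul, mul_comm n 2],
           ← pow_mul, mul_comm n 2]
        · rw [← smul_pow]
      have hnn : ‖((3:ℂ)^n)^2‖ = (3:ℝ)^(2*n) := by
        rw [← pow_mul, mul_comm n 2]; exact hn3 _
      rw [e, norm_smul, hnn]
      exact mul_le_mul_of_nonneg_left (hbase2 _) (by positivity)
    have hzero : Tendsto (fun n => (3:ℝ)^(2*n) * φ 0 0 (((3:ℂ)^n)⁻¹ • c)) atTop (𝓝 0) := by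
      have := hlim 0 0 c
      simpa [smul_zero] using this
    have hl1 : Tendsto (fun n => F (2*n) (c^2)) atTop (𝓝 (h (c^2))) := by
      apply (hh (c^2)).comp
      exact tendsto_atTop_mono (fun n => Nat.le_mul_of_pos_left n (by norm_num)) tendsto_id
    have hGlim : Tendsto G atTop (𝓝 (h (c^2) - (h c)^2)) := hl1.sub ((hh c).pow 2)
    have := tendsto_nhds_unique hGlim (squeeze_zero_norm hGn hzero)
    exact sub_eq_zero.mp this
  -- star preservation
  have hst : ∀ a : A, h (star a) = star (h a) := by
    intro a
    have hGn : ∀ n, ‖F n (star a) - star (F n a)‖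
        ≤ (3:ℝ)^n * φ (((3:ℂ)^n)⁻¹ • a) (((3:ℂ)^n)⁻¹ • a) (((3:ℂ)^n)⁻¹ • a) := by
      intro n
      have s1 : star (((3:ℂ)^n)⁻¹ • a) = ((3:ℂ)^n)⁻¹ • star a := by
        rw [star_smul]
        congr 1
        simp
      have s2 : star ((3:ℂ)^n • f (((3:ℂ)^n)⁻¹ • a))
          = (3:ℂ)^n • star (f (((3:ℂ)^n)⁻¹ • a)) := by
        rw [star_smul]
        congr 1
        simp
      have e : F n (star a) - star (F n a)
          = (3:ℂ)^n • (f (star (((3:ℂ)^n)⁻¹ • a)) - star (f (((3:ℂ)^n)⁻¹ • a))) := by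
        simp only [hF]
        rw [s1, s2, smul_sub]
      rw [e, norm_smul, hn3 n]
      exact mul_le_mul_of_nonneg_left (hstar _) (by positivity)
    have hzero : Tendsto (fun n =>
        (3:ℝ)^n * φ (((3:ℂ)^n)⁻¹ • a) (((3:ℂ)^n)⁻¹ • a) (((3:ℂ)^n)⁻¹ • a)) atTop (𝓝 0) :=
      (hsum a a a).tendsto_atTop_zero
    have hlim2 : Tendsto (fun n => F n (star a) - star (F n a)) atTop
        (𝓝 (h (star a) - star (h a))) := (hh (star a)).sub (hh a).star
    have := tendsto_nhds_unique hlim2 (squeeze_zero_norm hGn hzero)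
    exact sub_eq_zero.mp this
  -- assemble
  refine ⟨h, ⟨⟨⟨hadd, fun c x => hC c x⟩, hsq, hst⟩, hbnd⟩, ?_⟩
  rintro h' ⟨⟨hlin', _, _⟩, hbnd'⟩
  funext a
  set D : ℕ → ℝ := fun i =>
    (3:ℝ)^i * φ (((3:ℂ)^i)⁻¹ • a) (((3:ℂ)^i)⁻¹ • ((2:ℂ) • a)) 0 with hD
  have keyu : ∀ n : ℕ, ‖h' a - h a‖ ≤ 2 * ∑' i, D (i + n) := by
    intro n
    set x : A := ((3:ℂ)^n)⁻¹ • a with hx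
    have hx1 : h' a - h a = (3:ℂ)^n • (h' x - h x) := by
      rw [smul_sub, hx, hlin'.map_smul, hC, smul_inv_smul₀ (h3n n), smul_inv_smul₀ (h3n n)]
    have htri : ‖h' x - h x‖ ≤ ‖h' x - f x‖ + ‖h x - f x‖ := by
      calc ‖h' x - h x‖ = ‖(h' x - f x) + (f x - h x)‖ := by
            rw [show (h' x - f x) + (f x - h x) = h' x - h x by module]
        _ ≤ ‖h' x - f x‖ + ‖f x - h x‖ := norm_add_le _ _
        _ = ‖h' x - f x‖ + ‖h x - f x‖ := by rw [norm_sub_rev (f x)]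
    have hΨ : (3:ℝ)^n *
        (∑' i : ℕ, (3:ℝ)^i * φ (((3:ℂ)^i)⁻¹ • x) (((3:ℂ)^i)⁻¹ • ((2:ℂ) • x)) 0)
        = ∑' i, D (i + n) := by
      rw [← tsum_mul_left]
      refine tsum_congr fun i => ?_
      simp only [hD]
      rw [show ((3:ℂ)^i)⁻¹ • x = ((3:ℂ)^(i+n))⁻¹ • a by
            rw [hx, pow_add, mul_inv]; module,
          show ((3:ℂ)^i)⁻¹ • ((2:ℂ) • x) = ((3:ℂ)^(i+n))⁻¹ • ((2:ℂ) • a) by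
            rw [hx, pow_add, mul_inv]; module,
          pow_add]
      ring
    calc ‖h' a - h a‖ = (3:ℝ)^n * ‖h' x - h x‖ := by
          rw [hx1, norm_smul, hn3 n]
      _ ≤ (3:ℝ)^n * (‖h' x - f x‖ + ‖h x - f x‖) :=
          mul_le_mul_of_nonneg_left htri (by positivity)
      _ ≤ (3:ℝ)^n * ((∑' i : ℕ, (3:ℝ)^i * φ (((3:ℂ)^i)⁻¹ • x) (((3:ℂ)^i)⁻¹ • ((2:ℂ) • x)) 0)
            + (∑' i : ℕ, (3:ℝ)^i * φ (((3:ℂ)^i)⁻¹ • x) (((3:ℂ)^i)⁻¹ • ((2:ℂ) • x)) 0)) := by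
          apply mul_le_mul_of_nonneg_left _ (by positivity)
          exact add_le_add (hbnd' x) (hbnd x)
      _ = 2 * ((3:ℝ)^n *
            (∑' i : ℕ, (3:ℝ)^i * φ (((3:ℂ)^i)⁻¹ • x) (((3:ℂ)^i)⁻¹ • ((2:ℂ) • x)) 0)) := by
          ring
      _ = 2 * ∑' i, D (i + n) := by rw [hΨ]
  have htends : Tendsto (fun n => 2 * ∑' i, D (i + n)) atTop (𝓝 0) := by
    have := (tendsto_sum_nat_add D).const_mul (2:ℝ)
    simpa using this
  have hle : ‖h' a - h a‖ ≤ 0 := ge_of_tendsto htends (Eventually.of_forall keyu)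
  have : h' a - h a = 0 := norm_eq_zero.mp (le_antisymm hle (norm_nonneg _))
  exact sub_eq_zero.mp this
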